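/- Let X = [[A, B],[0, C]] be a block upper-triangular matrix where A, B, C have full column rank, σ_min(A) ≥ δ_A, ‖B‖ ≤ b, and σ_min(C) ≥ δ_C. Then σ_min(X) ≥ (δ_A δ_C / b) · (1 + (δ_A² + δ_C²)/b²)^{-1/2}. -/

import Mathlib

open Matrix

noncomputable def specNorm {m n : Type*} [Fintype m] [Fintype n] [DecidableEq n]
    (A : Matrix m n ℝ) : ℝ :=
  ‖LinearMap.toContinuousLinearMap (Matrix.toEuclideanLin A)‖

noncomputable def sMin {m n : Type*} [Fintype m] [Fintype n] [DecidableEq n]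
    (A : Matrix m n ℝ) : ℝ :=
  Real.sqrt (⨅ i, (show (Aᵀ * A).IsHermitian by
    simpa [conjTranspose_eq_transpose_of_trivial] using Matrix.isHermitian_conjTranspose_mul_self A).eigenvalues i)

noncomputable def singVals {m n : ℕ} (A : Matrix (Fin m) (Fin n) ℝ) : Fin n → ℝ :=
  fun i =>
    Real.sqrt ((show (Aᵀ * A).IsHermitian by
    simpa [conjTranspose_eq_transpose_of_trivial] using Matrix.isHermitian_conjTranspose_mul_self A).eigenvalues
      (Tuple.sort (show (Aᵀ * A).IsHermitian by
    simpa [conjTranspose_eq_transpose_of_trivial] using Matrix.isHermitian_conjTranspose_mul_self A).eigenvalues i.rev))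

noncomputable def pinv {m n : Type*} [Fintype m] [Fintype n] (A : Matrix m n ℝ) : Matrix n m ℝ :=
  open Classical in
  if h : ∃ B : Matrix n m ℝ,
      A * B * A = A ∧ B * A * B = B ∧ (A * B)ᵀ = A * B ∧ (B * A)ᵀ = B * A
  then h.choose else 0

lemma Matrix.isHermitian_transpose_mul_self {m n : Type*} [Fintype m] [Fintype n]
    (A : Matrix m n ℝ) : (Aᵀ * A).IsHermitian := by
  simpa [conjTranspose_eq_transpose_of_trivial] using Matrix.isHermitian_conjTranspose_mul_self A

section Aux

local notation "⟪" x ", " y "⟫" => @inner ℝ _ _ x y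

private lemma scalar_ineq (dA dC b s t p q r : ℝ) (hdA : 0 < dA) (hdC : 0 < dC) (hb : 0 < b)
    (hs : 0 ≤ s) (ht : 0 ≤ t) (hq : 0 ≤ q)
    (hp : dA * s ≤ p) (hqb : q ≤ b * t) (hr : dC * t ≤ r) :
    dA^2 * dC^2 / (b^2 + dA^2 + dC^2) * (s^2 + t^2) ≤ (p - q)^2 + r^2 := by
  have hS : (0:ℝ) < b^2 + dA^2 + dC^2 := by positivity
  rw [div_mul_eq_mul_div, div_le_iff₀ hS]
  have hp2 : dA^2 * s^2 ≤ p^2 := by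
    have := mul_self_le_mul_self (by positivity : (0:ℝ) ≤ dA*s) hp; nlinarith
  have hq2 : q^2 ≤ b^2 * t^2 := by
    have := mul_self_le_mul_self hq hqb; nlinarith
  have hr2 : dC^2 * t^2 ≤ r^2 := by
    have := mul_self_le_mul_self (by positivity : (0:ℝ) ≤ dC*t) hr; nlinarith
  have h2 : dC^2*(b^2+dA^2)*(dA^2*s^2) ≤ dC^2*(b^2+dA^2)*p^2 :=
    mul_le_mul_of_nonneg_left hp2 (by positivity)
  have h3 : dC^2*(b^2+dA^2+dC^2)*q^2 ≤ dC^2*(b^2+dA^2+dC^2)*(b^2*t^2) :=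
    mul_le_mul_of_nonneg_left hq2 (by positivity)
  have h4 : (b^2+dA^2)*(b^2+dA^2+dC^2)*(dC^2*t^2) ≤ (b^2+dA^2)*(b^2+dA^2+dC^2)*r^2 :=
    mul_le_mul_of_nonneg_left hr2 (by positivity)
  nlinarith [sq_nonneg ((b^2+dA^2)*p - (b^2+dA^2+dC^2)*q), sq_nonneg (dA*dC^2*t),
    (by positivity : (0:ℝ) < b^2+dA^2), sq_nonneg (dA*dC*s)]

private lemma rayleigh_lower {n : Type*} [Fintype n] [DecidableEq n] [Nonempty n]
    {M : Matrix n n ℝ} (hM : M.IsHermitian) (v : EuclideanSpace ℝ n) :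
    (⨅ i, hM.eigenvalues i) * ‖v‖ ^ 2 ≤ ⟪v, Matrix.toEuclideanLin M v⟫ := by
  set T := Matrix.toEuclideanLin M with hT
  set b := hM.eigenvectorBasis with hb
  have hsymm : (Matrix.toEuclideanLin M : _ →ₗ[ℝ] _).IsSymmetric :=
    Matrix.isHermitian_iff_isSymmetric.1 hM
  have hTb : ∀ i, T (b i) = hM.eigenvalues i • b i := by
    intro i
    have := hM.mulVec_eigenvectorBasis i
    apply (WithLp.equiv 2 _).injective
    simp only [hT, piLp_ofLp_toEuclideanLin]
    simpa using congrArg (fun w => w) this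
  have hrepr : ∀ i, b.repr (T v) i = hM.eigenvalues i * b.repr v i := by
    intro i
    rw [b.repr_apply_apply, b.repr_apply_apply, ← hsymm (b i) v, hTb i,
      real_inner_smul_left]
  have hinner : ⟪v, T v⟫ = ∑ i, b.repr v i * b.repr (T v) i := by
    rw [← b.repr.inner_map_map v (T v)]
    simp only [PiLp.inner_apply, RCLike.inner_apply, conj_trivial]
    exact Finset.sum_congr rfl fun _ _ => mul_comm _ _
  have hnorm : ‖v‖ ^ 2 = ∑ i, (b.repr v i) ^ 2 := by
    rw [← real_inner_self_eq_norm_sq, ← b.repr.inner_map_map v v]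
    simp only [PiLp.inner_apply, RCLike.inner_apply, conj_trivial, sq]
  rw [hinner, hnorm, Finset.mul_sum]
  apply Finset.sum_le_sum
  intro i _
  rw [hrepr i]
  have h1 : (⨅ j, hM.eigenvalues j) ≤ hM.eigenvalues i :=
    ciInf_le (Set.Finite.bddBelow (Set.finite_range _)) i
  nlinarith [sq_nonneg (b.repr v i)]

private lemma dot_eq_norm_sq {n : Type*} [Fintype n] (w : n → ℝ) :
    w ⬝ᵥ w = ‖(WithLp.equiv 2 (n → ℝ)).symm w‖ ^ 2 := by
  rw [← real_inner_self_eq_norm_sq]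
  simp only [PiLp.inner_apply, RCLike.inner_apply, conj_trivial, dotProduct]
  rfl

private lemma mulVec_dot_self {m n : Type*} [Fintype m] [Fintype n] (A : Matrix m n ℝ)
    (x : n → ℝ) : (A *ᵥ x) ⬝ᵥ (A *ᵥ x) = x ⬝ᵥ ((Aᴴ * A) *ᵥ x) := by
  rw [Matrix.conjTranspose_eq_transpose_of_trivial, ← mulVec_mulVec, mulVec_transpose,
    dotProduct_mulVec, dotProduct_comm]

private lemma norm_mulVec_ge {m n : Type*} [Fintype m] [Fintype n] [DecidableEq n] [Nonempty n]
    (A : Matrix m n ℝ) {d : ℝ} (hd : 0 < d) (hsd : d ≤ sMin A) (x : n → ℝ) :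
    d * ‖(WithLp.equiv 2 (n → ℝ)).symm x‖ ≤ ‖(WithLp.equiv 2 (m → ℝ)).symm (A *ᵥ x)‖ := by
  set μ := ⨅ i, (Matrix.isHermitian_transpose_mul_self A).eigenvalues i with hμ
  have hμpos : 0 < μ := by
    by_contra h
    push_neg at h
    have : Real.sqrt μ = 0 := Real.sqrt_eq_zero_of_nonpos h
    rw [sMin, ← hμ, this] at hsd
    linarith
  have hd2 : d ^ 2 ≤ μ := by
    have : d ^ 2 ≤ Real.sqrt μ ^ 2 := pow_le_pow_left₀ hd.le hsd 2
    rwa [Real.sq_sqrt hμpos.le] at this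
  have hray := rayleigh_lower (Matrix.isHermitian_transpose_mul_self A)
    ((WithLp.equiv 2 (n → ℝ)).symm x)
  rw [toEuclideanLin_apply] at hray
  have hx : ((WithLp.equiv 2 (n → ℝ)).symm x).ofLp = x := rfl
  rw [hx] at hray
  have hinner : ⟪(WithLp.equiv 2 (n → ℝ)).symm x,
      (WithLp.equiv 2 (n → ℝ)).symm ((Aᴴ * A) *ᵥ x)⟫ = x ⬝ᵥ ((Aᴴ * A) *ᵥ x) := by
    simp only [PiLp.inner_apply, RCLike.inner_apply, conj_trivial, dotProduct]
    exact Finset.sum_congr rfl fun _ _ => mul_comm _ _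
  replace hray := hray.trans_eq hinner
  have key : μ * ‖(WithLp.equiv 2 (n → ℝ)).symm x‖ ^ 2
      ≤ ‖(WithLp.equiv 2 (m → ℝ)).symm (A *ᵥ x)‖ ^ 2 := by
    rw [← dot_eq_norm_sq (A *ᵥ x), mulVec_dot_self]
    exact hray
  have h1 : (d * ‖(WithLp.equiv 2 (n → ℝ)).symm x‖) ^ 2
      ≤ ‖(WithLp.equiv 2 (m → ℝ)).symm (A *ᵥ x)‖ ^ 2 := by
    rw [mul_pow]
    nlinarith [norm_nonneg ((WithLp.equiv 2 (n → ℝ)).symm x),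
      sq_nonneg ‖(WithLp.equiv 2 (n → ℝ)).symm x‖]
  exact (pow_le_pow_iff_left₀ (by positivity) (norm_nonneg _) two_ne_zero).mp h1

private lemma le_sMin_of_norm {m n : Type*} [Fintype m] [Fintype n] [DecidableEq n] [Nonempty n]
    (X : Matrix m n ℝ) {K : ℝ} (hK : 0 ≤ K)
    (h : ∀ z : n → ℝ, K * ‖(WithLp.equiv 2 (n → ℝ)).symm z‖
      ≤ ‖(WithLp.equiv 2 (m → ℝ)).symm (X *ᵥ z)‖) : K ≤ sMin X := by
  set hH := Matrix.isHermitian_transpose_mul_self X with hHdef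
  have key : ∀ i, K ^ 2 ≤ hH.eigenvalues i := by
    intro i
    set v := hH.eigenvectorBasis i with hv
    have hnv : ‖v‖ = 1 := hH.eigenvectorBasis.orthonormal.1 i
    have hXv : (Xᴴ * X) *ᵥ ⇑v = hH.eigenvalues i • ⇑v := hH.mulVec_eigenvectorBasis i
    have hvv : (⇑v : n → ℝ) ⬝ᵥ ⇑v = 1 := by
      have : ((WithLp.equiv 2 (n → ℝ)).symm (⇑v : n → ℝ)) = v := rfl
      rw [dot_eq_norm_sq, this, hnv, one_pow]
    have h1 : ‖(WithLp.equiv 2 (m → ℝ)).symm (X *ᵥ ⇑v)‖ ^ 2 = hH.eigenvalues i := by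
      rw [← dot_eq_norm_sq, mulVec_dot_self, hXv, dotProduct_smul, smul_eq_mul, hvv, mul_one]
    have h2 := h ⇑v
    have h3 : ((WithLp.equiv 2 (n → ℝ)).symm (⇑v : n → ℝ)) = v := rfl
    rw [h3, hnv, mul_one] at h2
    calc K ^ 2 ≤ ‖(WithLp.equiv 2 (m → ℝ)).symm (X *ᵥ ⇑v)‖ ^ 2 :=
          pow_le_pow_left₀ hK h2 2
      _ = hH.eigenvalues i := h1
  have hle : K ^ 2 ≤ ⨅ i, hH.eigenvalues i := le_ciInf key
  have : K = Real.sqrt (K ^ 2) := (Real.sqrt_sq hK).symm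
  rw [this, sMin]
  exact Real.sqrt_le_sqrt hle

private lemma dot_sum_elim {n1 n2 : ℕ} (u : Fin n1 → ℝ) (w : Fin n2 → ℝ) :
    (Sum.elim u w) ⬝ᵥ (Sum.elim u w) = u ⬝ᵥ u + w ⬝ᵥ w := by
  simp [dotProduct, Fintype.sum_sum_type]

end Aux

theorem sMin_blockTriangular_lower_bound {m1 m2 n1 n2 : ℕ}
    (A : Matrix (Fin m1) (Fin n1) ℝ) (B : Matrix (Fin m1) (Fin n2) ℝ)
    (C : Matrix (Fin m2) (Fin n2) ℝ)
    (hA : A.rank = n1) (hBrank : B.rank = n2) (hC : C.rank = n2)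
    (dA dC b : ℝ) (hdA : 0 < dA) (hdC : 0 < dC) (hb : 0 < b)
    (hsA : dA ≤ sMin A) (hB : specNorm B ≤ b) (hsC : dC ≤ sMin C) :
    dA * dC / b * (Real.sqrt (1 + (dA ^ 2 + dC ^ 2) / b ^ 2))⁻¹ ≤
      sMin (Matrix.fromBlocks A B 0 C) := by
  -- n1 and n2 are positive
  have hn1 : 0 < n1 := by
    rcases Nat.eq_zero_or_pos n1 with h | h
    · exfalso
      subst h
      rw [sMin] at hsA
      have : (⨅ i : Fin 0, (Matrix.isHermitian_transpose_mul_self A).eigenvalues i) = 0 :=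
        Real.iInf_of_isEmpty _
      rw [this, Real.sqrt_zero] at hsA
      linarith
    · exact h
  have hn2 : 0 < n2 := by
    rcases Nat.eq_zero_or_pos n2 with h | h
    · exfalso
      subst h
      rw [sMin] at hsC
      have : (⨅ i : Fin 0, (Matrix.isHermitian_transpose_mul_self C).eigenvalues i) = 0 :=
        Real.iInf_of_isEmpty _
      rw [this, Real.sqrt_zero] at hsC
      linarith
    · exact h
  haveI : Nonempty (Fin n1) := Fin.pos_iff_nonempty.mp hn1
  haveI : Nonempty (Fin n2) := Fin.pos_iff_nonempty.mp hn2
  set K := dA * dC / b * (Real.sqrt (1 + (dA ^ 2 + dC ^ 2) / b ^ 2))⁻¹ with hKdef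
  have hu : (0:ℝ) < 1 + (dA ^ 2 + dC ^ 2) / b ^ 2 := by positivity
  have hK0 : 0 ≤ K := by positivity
  have hK2 : K ^ 2 = dA^2 * dC^2 / (b^2 + dA^2 + dC^2) := by
    rw [hKdef, mul_pow, div_pow, inv_pow, Real.sq_sqrt hu.le]
    field_simp
    ring
  apply le_sMin_of_norm _ hK0
  intro z
  set x : Fin n1 → ℝ := z ∘ Sum.inl with hx
  set y : Fin n2 → ℝ := z ∘ Sum.inr with hy
  have hz : z = Sum.elim x y := by
    funext i; cases i <;> rfl
  have hmul : Matrix.fromBlocks A B 0 C *ᵥ z = Sum.elim (A *ᵥ x + B *ᵥ y) (C *ᵥ y) := by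
    rw [hz, Matrix.fromBlocks_mulVec]
    simp
  -- abbreviations
  set s := ‖(WithLp.equiv 2 (Fin n1 → ℝ)).symm x‖ with hs
  set t := ‖(WithLp.equiv 2 (Fin n2 → ℝ)).symm y‖ with ht
  set p := ‖(WithLp.equiv 2 (Fin m1 → ℝ)).symm (A *ᵥ x)‖ with hp
  set q := ‖(WithLp.equiv 2 (Fin m1 → ℝ)).symm (B *ᵥ y)‖ with hq
  set r := ‖(WithLp.equiv 2 (Fin m2 → ℝ)).symm (C *ᵥ y)‖ with hr
  have hps : dA * s ≤ p := norm_mulVec_ge A hdA hsA x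
  have hrt : dC * t ≤ r := norm_mulVec_ge C hdC hsC y
  have hqt : q ≤ b * t := by
    have h1 : q ≤ specNorm B * t := by
      have := (LinearMap.toContinuousLinearMap (Matrix.toEuclideanLin B)).le_opNorm
        ((WithLp.equiv 2 (Fin n2 → ℝ)).symm y)
      simpa [specNorm, toEuclideanLin_apply, hq, ht] using this
    calc q ≤ specNorm B * t := h1
      _ ≤ b * t := mul_le_mul_of_nonneg_right hB (norm_nonneg _)
  -- squared norm of X z
  have hzz : z ⬝ᵥ z = s^2 + t^2 := by
    rw [hz, dot_sum_elim, dot_eq_norm_sq, dot_eq_norm_sq]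
  have hXz : (Matrix.fromBlocks A B 0 C *ᵥ z) ⬝ᵥ (Matrix.fromBlocks A B 0 C *ᵥ z)
      = ‖(WithLp.equiv 2 (Fin m1 → ℝ)).symm (A *ᵥ x + B *ᵥ y)‖^2 + r^2 := by
    rw [hmul, dot_sum_elim, dot_eq_norm_sq, dot_eq_norm_sq]
  have hcross : (p - q)^2 ≤ ‖(WithLp.equiv 2 (Fin m1 → ℝ)).symm (A *ᵥ x + B *ᵥ y)‖^2 := by
    have hadd : (WithLp.equiv 2 (Fin m1 → ℝ)).symm (A *ᵥ x + B *ᵥ y)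
        = (WithLp.equiv 2 (Fin m1 → ℝ)).symm (A *ᵥ x) + (WithLp.equiv 2 (Fin m1 → ℝ)).symm (B *ᵥ y) := by
      simp
    have h1 : p - q ≤ ‖(WithLp.equiv 2 (Fin m1 → ℝ)).symm (A *ᵥ x + B *ᵥ y)‖ := by
      rw [hadd, hp, hq]
      have := norm_add_le ((WithLp.equiv 2 (Fin m1 → ℝ)).symm (A *ᵥ x) + (WithLp.equiv 2 (Fin m1 → ℝ)).symm (B *ᵥ y)) (-(WithLp.equiv 2 (Fin m1 → ℝ)).symm (B *ᵥ y))
      simp only [add_neg_cancel_right, norm_neg] at this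
      linarith
    have h2 : -(‖(WithLp.equiv 2 (Fin m1 → ℝ)).symm (A *ᵥ x + B *ᵥ y)‖) ≤ p - q := by
      rw [hadd, hp, hq]
      have := norm_add_le ((WithLp.equiv 2 (Fin m1 → ℝ)).symm (A *ᵥ x) + (WithLp.equiv 2 (Fin m1 → ℝ)).symm (B *ᵥ y)) (-(WithLp.equiv 2 (Fin m1 → ℝ)).symm (A *ᵥ x))
      have h0 : (WithLp.equiv 2 (Fin m1 → ℝ)).symm (A *ᵥ x) + (WithLp.equiv 2 (Fin m1 → ℝ)).symm (B *ᵥ y) + -(WithLp.equiv 2 (Fin m1 → ℝ)).symm (A *ᵥ x) = (WithLp.equiv 2 (Fin m1 → ℝ)).symm (B *ᵥ y) := by abel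
      rw [h0, norm_neg] at this
      linarith
    exact sq_le_sq' h2 h1
  -- main inequality (squared)
  have hmain : K^2 * (s^2 + t^2) ≤ (p - q)^2 + r^2 := by
    rw [hK2]
    exact scalar_ineq dA dC b s t p q r hdA hdC hb (norm_nonneg _) (norm_nonneg _)
      (norm_nonneg _) hps hqt hrt
  have hfinal : (K * ‖(WithLp.equiv 2 (Fin n1 ⊕ Fin n2 → ℝ)).symm z‖)^2
      ≤ ‖(WithLp.equiv 2 (Fin m1 ⊕ Fin m2 → ℝ)).symm (Matrix.fromBlocks A B 0 C *ᵥ z)‖^2 := by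
    rw [mul_pow, ← dot_eq_norm_sq z, ← dot_eq_norm_sq (Matrix.fromBlocks A B 0 C *ᵥ z), hzz, hXz]
    calc K^2 * (s^2 + t^2) ≤ (p - q)^2 + r^2 := hmain
      _ ≤ _ := by linarith [hcross]
  exact (pow_le_pow_iff_left₀ (by positivity) (norm_nonneg _) two_ne_zero).mp hfinal
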